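/- Let r = (61 + 7√217)/128. For all real numbers β, δ, λ, μ satisfying β ≥ 1 − μ, δ ≥ 1 − μ/λ, 1 ≥ λ ≥ μ > 0, 0 ≤ β ≤ 1, and 0 ≤ δ ≤ 1, one has μ + β(1 − λ/r) + δ(λ − μ) − 1/r ≥ 0. -/

import Mathlib

/-- Let r = (61 + 7√217)/128. For all real β, δ, λ, μ with
β ≥ 1 − μ, δ ≥ 1 − μ/λ, 1 ≥ λ ≥ μ > 0, 0 ≤ β ≤ 1, 0 ≤ δ ≤ 1, one has
μ + β(1 − λ/r) + δ(λ − μ) − 1/r ≥ 0. -/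
theorem gsp_key_optimization_lemma (β δ lam mu : ℝ)
    (hwf1 : β ≥ 1 - mu) (hwf2 : δ ≥ 1 - mu / lam)
    (hl1 : lam ≤ 1) (hlm : mu ≤ lam) (hm0 : 0 < mu)
    (hβ0 : 0 ≤ β) (hβ1 : β ≤ 1) (hδ0 : 0 ≤ δ) (hδ1 : δ ≤ 1) :
    0 ≤ mu + β * (1 - lam / ((61 + 7 * Real.sqrt 217) / 128))
        + δ * (lam - mu) - 1 / ((61 + 7 * Real.sqrt 217) / 128) := by
  have hl0 : 0 < lam := lt_of_lt_of_le hm0 hlm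
  set s : ℝ := Real.sqrt 217 with hsdef
  have hs : s ^ 2 = 217 := Real.sq_sqrt (by norm_num)
  have hs0 : 0 ≤ s := Real.sqrt_nonneg 217
  have hs14 : 14 ≤ s := by nlinarith [hs, hs0]
  set r : ℝ := (61 + 7 * s) / 128 with hrdef
  have hr1 : 1 < r := by rw [hrdef]; nlinarith [hs14]
  have hr0 : 0 < r := lt_trans one_pos hr1
  have hrq : 64 * r ^ 2 = 61 * r + 27 := by
    rw [hrdef]; field_simp; linear_combination (3136 : ℝ) * hs
  -- the key polynomial inequality
  have hN : 0 ≤ r * lam * mu + lam * (1 - mu) * (r - lam) + r * (lam - mu) ^ 2 - lam := by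
    set N : ℝ := r * lam * mu + lam * (1 - mu) * (r - lam) + r * (lam - mu) ^ 2 - lam with hNdef
    have key : 1372 * r * N =
        343 * (2 * r * mu - 2 * r * lam + lam ^ 2) ^ 2
          + lam * (7 * lam - 8 * r + 6) ^ 2 * (12 * r + 12 - 7 * lam) := by
      rw [hNdef]
      linear_combination (-12 * r * lam + 16 * lam + 28 * lam ^ 2) * hrq
    have h1 : 0 ≤ 343 * (2 * r * mu - 2 * r * lam + lam ^ 2) ^ 2 := by positivity
    have h2 : 0 ≤ lam * (7 * lam - 8 * r + 6) ^ 2 * (12 * r + 12 - 7 * lam) := by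
      apply mul_nonneg (mul_nonneg hl0.le (sq_nonneg _))
      nlinarith [hr1, hl1]
    nlinarith [key, h1, h2, hr0]
  -- lower bound using monotonicity in β and δ
  have hlam_r : 0 ≤ 1 - lam / r := by
    have : lam / r ≤ 1 := by
      rw [div_le_one hr0]; linarith
    linarith
  have hA : (1 - mu) * (1 - lam / r) ≤ β * (1 - lam / r) :=
    mul_le_mul_of_nonneg_right hwf1 hlam_r
  have hB : (1 - mu / lam) * (lam - mu) ≤ δ * (lam - mu) :=
    mul_le_mul_of_nonneg_right hwf2 (by linarith)
  have hg : 0 ≤ mu + (1 - mu) * (1 - lam / r) + (1 - mu / lam) * (lam - mu) - 1 / r := by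
    have expand : mu + (1 - mu) * (1 - lam / r) + (1 - mu / lam) * (lam - mu) - 1 / r
        = (r * lam * mu + lam * (1 - mu) * (r - lam) + r * (lam - mu) ^ 2 - lam) / (r * lam) := by
      field_simp
    rw [expand]
    exact div_nonneg hN (by positivity)
  calc (0 : ℝ) ≤ mu + (1 - mu) * (1 - lam / r) + (1 - mu / lam) * (lam - mu) - 1 / r := hg
    _ ≤ mu + β * (1 - lam / r) + δ * (lam - mu) - 1 / r := by linarith
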